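/- Let d ≥ 1 and h ≥ 1 be integers, r = (r_1,…,r_d) ∈ (ℕ⁺)^d, N a positive integer, and let 0 ≤ η ≤ h−1, 0 ≤ ℓ ≤ η and 1 ≤ λ ≤ h−η be integers. If k > −τ(r,𝔇) + (h−η−ℓ)/2, then the quantity I_{1,2,λ} := ∑_{f_1≥1} ⋯ ∑_{f_λ≥1} ∫_{(1/N)} |e^{Nz}| |z|^{−k−1−τ(r,𝔇)−(h−η+ℓ)/2} e^{−π² Re(1/z)(f_1²+⋯+f_λ²)} |ω₂(π²/z)|^{h−η−λ} |dz| is finite. In particular, for k > −τ(r,𝔇) + h/2 all such quantities are finite, justifying term-by-term integration of the expansion of ω₂(z)^h over the line Re z = 1/N against e^{Nz} z^{−k−1−τ(r,𝔇)−(h−η+ℓ)/2}. -/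

import Mathlib

open Complex BigOperators MeasureTheory ENNReal

noncomputable section

/-- `ω₂(z) := ∑_{m ≥ 1} e^{-m² z}`. -/
def omega2 (z : ℂ) : ℂ := ∑' m : ℕ+, Complex.exp (-((m : ℕ) : ℂ) ^ 2 * z)

/-! ### Auxiliary lemmas -/

lemma summable_nat_exp {c : ℝ} (hc : 0 < c) :
    Summable (fun n : ℕ => Real.exp (-(c * ((n : ℝ) + 1) ^ 2))) := by
  have hr : Real.exp (-c) < 1 := Real.exp_lt_one_iff.mpr (by linarith)
  refine Summable.of_nonneg_of_le (fun n => (Real.exp_pos _).le)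
    (fun n => ?_) (summable_geometric_of_lt_one (Real.exp_nonneg _) hr)
  rw [← Real.exp_nat_mul]
  apply Real.exp_le_exp.mpr
  have h1 : (0:ℝ) ≤ (n:ℝ) := Nat.cast_nonneg n
  nlinarith [sq_nonneg ((n:ℝ))]

/-- theta-type sum -/
def thsum (c : ℝ) : ℝ := ∑' n : ℕ+, Real.exp (-(c * ((n : ℕ) : ℝ) ^ 2))

lemma summable_pnat_exp {c : ℝ} (hc : 0 < c) :
    Summable (fun n : ℕ+ => Real.exp (-(c * ((n : ℕ) : ℝ) ^ 2))) := by
  rw [← Equiv.pnatEquivNat.symm.summable_iff]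
  exact (summable_nat_exp hc).congr fun n => by
    simp [Equiv.pnatEquivNat, Nat.succPNat]

lemma thsum_eq (c : ℝ) : thsum c = ∑' n : ℕ, Real.exp (-(c * ((n : ℝ) + 1) ^ 2)) := by
  rw [thsum, ← Equiv.pnatEquivNat.symm.tsum_eq]
  exact tsum_congr fun n => by simp [Equiv.pnatEquivNat, Nat.succPNat]

lemma tail_le {c : ℝ} (hc : 0 < c) (M : ℕ) :
    ∑' n : ℕ, Real.exp (-(c * (((n + M : ℕ) : ℝ) + 1) ^ 2))
      ≤ (1 - Real.exp (-(c * ((M : ℝ) + 1))))⁻¹ * Real.exp (-(c * ((M : ℝ) + 1))) ^ (M + 1) := by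
  have hx0 : 0 < c * ((M : ℝ) + 1) := by positivity
  set rr : ℝ := Real.exp (-(c * ((M : ℝ) + 1))) with hrr
  have hrr1 : rr < 1 := Real.exp_lt_one_iff.mpr (by linarith)
  have hrr0 : 0 ≤ rr := Real.exp_nonneg _
  have hterm : ∀ n : ℕ, Real.exp (-(c * (((n + M : ℕ) : ℝ) + 1) ^ 2)) ≤ rr ^ (M + 1) * rr ^ n := by
    intro n
    rw [hrr, ← Real.exp_nat_mul, ← Real.exp_nat_mul, ← Real.exp_add]
    apply Real.exp_le_exp.mpr
    push_cast
    have h1 : (0:ℝ) ≤ (n:ℝ) := Nat.cast_nonneg n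
    have h2 : (0:ℝ) ≤ (M:ℝ) := Nat.cast_nonneg M
    nlinarith [mul_nonneg (mul_nonneg hc.le h1) (by linarith : (0:ℝ) ≤ (n:ℝ)+(M:ℝ)+1)]
  calc ∑' n : ℕ, Real.exp (-(c * (((n + M : ℕ) : ℝ) + 1) ^ 2))
      ≤ ∑' n : ℕ, rr ^ (M + 1) * rr ^ n := by
        refine Summable.tsum_le_tsum hterm ((summable_nat_add_iff M).mpr (summable_nat_exp hc)) ?_
        exact (summable_geometric_of_lt_one hrr0 hrr1).mul_left _
    _ = rr ^ (M + 1) * (1 - rr)⁻¹ := by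
        rw [tsum_mul_left, tsum_geometric_of_lt_one hrr0 hrr1]
    _ = (1 - rr)⁻¹ * rr ^ (M + 1) := by ring

lemma tail_alg {c : ℝ} (hc : 0 < c) (M : ℕ) (hM1 : 1 ≤ M)
    (hMge : 1 / Real.sqrt c ≤ (M : ℝ)) :
    (1 - Real.exp (-(c * ((M : ℝ) + 1))))⁻¹ * Real.exp (-(c * ((M : ℝ) + 1))) ^ (M + 1)
      ≤ 1 / Real.sqrt c := by
  have hs0 : 0 < Real.sqrt c := Real.sqrt_pos.mpr hc
  set x : ℝ := c * ((M : ℝ) + 1) with hxd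
  have hx0 : 0 < x := by positivity
  have hxs : Real.sqrt c ≤ x := by
    have h1 : Real.sqrt c * Real.sqrt c = c := Real.mul_self_sqrt hc.le
    have h2 : Real.sqrt c * (1 / Real.sqrt c) = 1 := by field_simp
    have hM1' : (1:ℝ) ≤ (M:ℝ) := by exact_mod_cast hM1
    calc Real.sqrt c = Real.sqrt c * 1 := by ring
      _ ≤ Real.sqrt c * ((Real.sqrt c) * ((M:ℝ)+1)) := by
          nlinarith
      _ = c * ((M:ℝ)+1) := by rw [← mul_assoc, h1]
  have h1r : x * Real.exp (-x) ≤ 1 - Real.exp (-x) := by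
    have h := Real.add_one_le_exp x
    have hex : 0 < Real.exp (-x) := Real.exp_pos _
    have hmul : Real.exp x * Real.exp (-x) = 1 := by
      rw [← Real.exp_add]; simp
    nlinarith
  have hpow : Real.exp (-x) ^ (M + 1) ≤ Real.exp (-x) * Real.exp (-x) := by
    have h2 : Real.exp (-x) ^ (M + 1) ≤ Real.exp (-x) ^ 2 :=
      pow_le_pow_of_le_one (Real.exp_nonneg _)
        (Real.exp_le_one_iff.mpr (by linarith)) (by omega)
    calc Real.exp (-x) ^ (M+1) ≤ Real.exp (-x) ^ 2 := h2
      _ = Real.exp (-x) * Real.exp (-x) := sq _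
  have hex : 0 < Real.exp (-x) := Real.exp_pos _
  have h1r0 : 0 < 1 - Real.exp (-x) := by nlinarith
  calc (1 - Real.exp (-x))⁻¹ * Real.exp (-x) ^ (M + 1)
      ≤ (x * Real.exp (-x))⁻¹ * (Real.exp (-x) * Real.exp (-x)) := by
        apply mul_le_mul (by
          apply inv_anti₀ (by positivity) h1r) hpow (by positivity) (by positivity)
    _ = Real.exp (-x) / x := by field_simp
    _ ≤ 1 / x := by
        gcongr
        exact Real.exp_le_one_iff.mpr (by linarith)
    _ ≤ 1 / Real.sqrt c := one_div_le_one_div_of_le hs0 hxs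

lemma thsum_le {c : ℝ} (hc : 0 < c) : thsum c ≤ 1 + 2 / Real.sqrt c := by
  have hs0 : 0 < Real.sqrt c := Real.sqrt_pos.mpr hc
  obtain ⟨M, hM1, hMge, hMle⟩ : ∃ M : ℕ, 1 ≤ M ∧ 1 / Real.sqrt c ≤ (M:ℝ) ∧
      (M:ℝ) ≤ 1 / Real.sqrt c + 1 := by
    refine ⟨⌈1/Real.sqrt c⌉₊, ?_, Nat.le_ceil _, (Nat.ceil_lt_add_one (by positivity)).le⟩
    rw [Nat.one_le_iff_ne_zero]
    simp only [ne_eq, Nat.ceil_eq_zero, not_le]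
    positivity
  rw [thsum_eq, ← Summable.sum_add_tsum_nat_add M (summable_nat_exp hc)]
  have hhead : ∑ i ∈ Finset.range M, Real.exp (-(c * ((i : ℝ) + 1) ^ 2)) ≤ M := by
    calc ∑ i ∈ Finset.range M, Real.exp (-(c * ((i : ℝ) + 1) ^ 2))
        ≤ ∑ _i ∈ Finset.range M, (1:ℝ) := by
          refine Finset.sum_le_sum fun i _ =>
            Real.exp_le_one_iff.mpr (by nlinarith [sq_nonneg ((i:ℝ)+1)])
      _ = M := by simp
  have htail := (tail_le hc M).trans (tail_alg hc M hM1 hMge)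
  have h2 : 2 / Real.sqrt c = 1 / Real.sqrt c + 1 / Real.sqrt c := by ring
  linarith

lemma thsum_nonneg (c : ℝ) : 0 ≤ thsum c := tsum_nonneg fun n => (Real.exp_pos _).le

lemma abs_omega2_le {w : ℂ} (hw : 0 < w.re) :
    ‖omega2 w‖ ≤ thsum w.re := by
  have hnorm : ∀ m : ℕ+, ‖Complex.exp (-((m : ℕ) : ℂ) ^ 2 * w)‖
      = Real.exp (-(w.re * ((m : ℕ) : ℝ) ^ 2)) := by
    intro m
    rw [Complex.norm_exp]
    congr 1
    have h : (-((m : ℕ) : ℂ) ^ 2 * w) = (((-(((m:ℕ):ℝ) ^ 2)) : ℝ) : ℂ) * w := by push_cast; ring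
    rw [h, Complex.re_ofReal_mul]
    ring
  have hsumm : Summable fun m : ℕ+ => ‖Complex.exp (-((m : ℕ) : ℂ) ^ 2 * w)‖ :=
    (summable_pnat_exp hw).congr fun m => (hnorm m).symm
  rw [omega2]
  calc ‖∑' m : ℕ+, Complex.exp (-((m : ℕ) : ℂ) ^ 2 * w)‖
      ≤ ∑' m : ℕ+, ‖Complex.exp (-((m : ℕ) : ℂ) ^ 2 * w)‖ := norm_tsum_le_tsum_norm hsumm
    _ = thsum w.re := tsum_congr hnorm

lemma tsum_pi_pow (g : ℕ+ → ℝ≥0∞) : ∀ n : ℕ,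
    (∑' f : Fin n → ℕ+, ∏ i, g (f i)) = (∑' a, g a) ^ n := by
  intro n
  induction n with
  | zero =>
    rw [pow_zero]
    rw [show (fun f : Fin 0 → ℕ+ => ∏ i, g (f i)) = fun _ => 1 from funext fun f => by simp]
    exact tsum_eq_single default fun b hb => absurd (Subsingleton.elim b default) hb
  | succ n ih =>
    rw [← (Fin.consEquiv (fun _ : Fin (n+1) => ℕ+)).tsum_eq]
    rw [show (fun p : ℕ+ × (Fin n → ℕ+) => ∏ i, g ((Fin.consEquiv fun _ => ℕ+) p i))
        = fun p : ℕ+ × (Fin n → ℕ+) => g p.1 * ∏ i, g (p.2 i) from funext fun p => by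
          simp [Fin.consEquiv, Fin.prod_univ_succ]]
    rw [ENNReal.tsum_prod']
    simp_rw [ENNReal.tsum_mul_left, ih]
    rw [ENNReal.tsum_mul_right, pow_succ, mul_comm]

lemma zz_re (N : ℕ) (y : ℝ) : ((1 / (N : ℂ)) + y * Complex.I).re = (N : ℝ)⁻¹ := by
  simp

lemma abs_zz_pos {N : ℕ} (hN : 1 ≤ N) (y : ℝ) :
    (0 : ℝ) < ‖(1 / (N : ℂ)) + y * Complex.I‖ := by
  have h1 : (0:ℝ) < (N:ℝ)⁻¹ := by
    have : (0:ℝ) < (N:ℝ) := by exact_mod_cast hN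
    positivity
  calc (0:ℝ) < (N:ℝ)⁻¹ := h1
    _ = ((1 / (N : ℂ)) + y * Complex.I).re := (zz_re N y).symm
    _ ≤ |((1 / (N : ℂ)) + y * Complex.I).re| := le_abs_self _
    _ ≤ ‖(1 / (N : ℂ)) + y * Complex.I‖ := Complex.abs_re_le_norm _

lemma abs_zz_ge_inv {N : ℕ} (hN : 1 ≤ N) (y : ℝ) :
    (N : ℝ)⁻¹ ≤ ‖(1 / (N : ℂ)) + y * Complex.I‖ := by
  calc (N:ℝ)⁻¹ = ((1 / (N : ℂ)) + y * Complex.I).re := (zz_re N y).symm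
    _ ≤ |((1 / (N : ℂ)) + y * Complex.I).re| := le_abs_self _
    _ ≤ _ := Complex.abs_re_le_norm _

lemma abs_zz_ge_abs (N : ℕ) (y : ℝ) :
    |y| ≤ ‖(1 / (N : ℂ)) + y * Complex.I‖ := by
  have him : ((1 / (N : ℂ)) + y * Complex.I).im = y := by simp
  calc |y| = |((1 / (N : ℂ)) + y * Complex.I).im| := by rw [him]
    _ ≤ _ := Complex.abs_im_le_norm _

lemma inv_zz_re (N : ℕ) (y : ℝ) :
    (1 / ((1 / (N : ℂ)) + y * Complex.I)).re
      = (N : ℝ)⁻¹ / ‖(1 / (N : ℂ)) + y * Complex.I‖ ^ 2 := by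
  rw [one_div, Complex.inv_re, zz_re, Complex.sq_norm]

lemma lintegral_abs_rpow {N : ℕ} (hN : 1 ≤ N) {q : ℝ} (hq : q < -1) {c0 : ℝ} (hc0 : 0 ≤ c0) :
    ∫⁻ y : ℝ, ENNReal.ofReal
      (c0 * ‖(1 / (N : ℂ)) + y * Complex.I‖ ^ q) < ⊤ := by
  have hNpos : (0:ℝ) < N := by exact_mod_cast hN
  set C : ℝ := c0 * ((N:ℝ) + 1) ^ (-q) with hC
  have hint : Integrable (fun y : ℝ => C * (1 + ‖y‖) ^ q) := by
    have h1 : ((Module.finrank ℝ ℝ : ℝ)) < -q := by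
      simp only [Module.finrank_self, Nat.cast_one]; linarith
    have := (integrable_one_add_norm (E := ℝ) (μ := volume) h1).const_mul C
    simpa using this
  refine lt_of_le_of_lt (lintegral_mono fun y => ENNReal.ofReal_le_ofReal ?_)
    hint.lintegral_lt_top
  have hA := abs_zz_pos hN y
  have hbase : (0:ℝ) < (1 + ‖y‖) / ((N:ℝ) + 1) := by
    have h0 : (0:ℝ) ≤ ‖y‖ := norm_nonneg y
    positivity
  have hle : (1 + ‖y‖) / ((N:ℝ) + 1) ≤ ‖(1 / (N : ℂ)) + y * Complex.I‖ := by
    rw [div_le_iff₀ (by positivity)]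
    have h1 : (1:ℝ) ≤ (N:ℝ) * ‖(1 / (N : ℂ)) + y * Complex.I‖ := by
      have h2 := abs_zz_ge_inv hN y
      calc (1:ℝ) = (N:ℝ) * (N:ℝ)⁻¹ := by field_simp
        _ ≤ (N:ℝ) * ‖(1 / (N : ℂ)) + y * Complex.I‖ :=
            mul_le_mul_of_nonneg_left h2 hNpos.le
    have h2 : ‖y‖ ≤ ‖(1 / (N : ℂ)) + y * Complex.I‖ := by
      simpa [Real.norm_eq_abs] using abs_zz_ge_abs N y
    nlinarith
  have hrpow : ‖(1 / (N : ℂ)) + y * Complex.I‖ ^ q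
      ≤ ((1 + ‖y‖) / ((N:ℝ) + 1)) ^ q :=
    Real.rpow_le_rpow_of_nonpos hbase hle (by linarith)
  calc c0 * ‖(1 / (N : ℂ)) + y * Complex.I‖ ^ q
      ≤ c0 * ((1 + ‖y‖) / ((N:ℝ) + 1)) ^ q := mul_le_mul_of_nonneg_left hrpow hc0
    _ = C * (1 + ‖y‖) ^ q := by
        rw [Real.div_rpow (by positivity) (by positivity), hC]
        rw [Real.rpow_neg (by positivity)]
        field_simp

lemma cc_pos {N : ℕ} (hN : 1 ≤ N) (y : ℝ) :
    0 < Real.pi ^ 2 * ((1 / ((1 / (N : ℂ)) + y * Complex.I)).re) := by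
  rw [inv_zz_re]
  have h1 := abs_zz_pos hN y
  have h2 : (0:ℝ) < (N:ℝ) := by exact_mod_cast hN
  positivity

lemma thsum_cc_le {N : ℕ} (hN : 1 ≤ N) (y : ℝ) :
    thsum (Real.pi ^ 2 * ((1 / ((1 / (N : ℂ)) + y * Complex.I)).re))
      ≤ 3 * N * ‖(1 / (N : ℂ)) + y * Complex.I‖ := by
  have hA := abs_zz_pos hN y
  have hNp : (0:ℝ) < (N:ℝ) := by exact_mod_cast hN
  set Ay : ℝ := ‖(1 / (N : ℂ)) + y * Complex.I‖ with hAy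
  have hcc := cc_pos hN y
  rw [inv_zz_re] at hcc ⊢
  set cy : ℝ := Real.pi ^ 2 * ((N : ℝ)⁻¹ / Ay ^ 2) with hcy
  have hstep := thsum_le hcc
  have hsqrt : Real.sqrt cy * (Real.sqrt N * Ay) = Real.pi := by
    rw [show Real.sqrt (N:ℝ) * Ay = Real.sqrt ((N:ℝ) * Ay ^ 2) from by
      rw [Real.sqrt_mul (le_of_lt hNp), Real.sqrt_sq hA.le]]
    rw [← Real.sqrt_mul hcc.le]
    rw [show cy * ((N:ℝ) * Ay ^ 2) = Real.pi ^ 2 from by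
      rw [hcy]; field_simp]
    exact Real.sqrt_sq Real.pi_pos.le
  have hkey : 1 / Real.sqrt cy ≤ Real.sqrt N * Ay := by
    rw [div_le_iff₀ (Real.sqrt_pos.mpr hcc)]
    rw [mul_comm (Real.sqrt (N:ℝ) * Ay) (Real.sqrt cy), hsqrt]
    linarith [Real.pi_gt_three]
  have hsN : Real.sqrt (N:ℝ) ≤ (N:ℝ) := by
    have h1 : (1:ℝ) ≤ (N:ℝ) := by exact_mod_cast hN
    exact (Real.sqrt_le_left hNp.le).mpr (by nlinarith)
  have hNA : (1:ℝ) ≤ (N:ℝ) * Ay := by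
    have h2 := abs_zz_ge_inv hN y
    calc (1:ℝ) = (N:ℝ) * (N:ℝ)⁻¹ := by field_simp
      _ ≤ (N:ℝ) * Ay := mul_le_mul_of_nonneg_left h2 hNp.le
  have h2d : 2 / Real.sqrt cy = 2 * (1 / Real.sqrt cy) := by ring
  have hs2 : Real.sqrt (N:ℝ) * Ay ≤ (N:ℝ) * Ay := mul_le_mul_of_nonneg_right hsN hA.le
  nlinarith [hstep, hkey]

lemma zz_ne_zero {N : ℕ} (hN : 1 ≤ N) (y : ℝ) : (1 / (N : ℂ)) + y * Complex.I ≠ 0 := by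
  intro h0
  have h := abs_zz_pos hN y
  rw [h0] at h
  simp at h

lemma stepC (lam : ℕ) {cy : ℝ} (hcy : 0 < cy) {C0 : ℝ} (hC0 : 0 ≤ C0) {K : ℝ} (hK0 : 0 ≤ K)
    (hK : thsum cy ≤ K) :
    (∑' f : Fin lam → ℕ+,
        ENNReal.ofReal (C0 * Real.exp (-(cy * ∑ i, ((f i : ℕ) : ℝ) ^ 2))))
      ≤ ENNReal.ofReal (C0 * K ^ lam) := by
  have h1 : ∀ f : Fin lam → ℕ+,
      ENNReal.ofReal (C0 * Real.exp (-(cy * ∑ i, ((f i : ℕ) : ℝ) ^ 2)))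
      = ENNReal.ofReal C0 * ∏ i, ENNReal.ofReal (Real.exp (-(cy * ((f i : ℕ) : ℝ) ^ 2))) := by
    intro f
    rw [show (-(cy * ∑ i, ((f i : ℕ) : ℝ) ^ 2)) = ∑ i, -(cy * ((f i : ℕ) : ℝ) ^ 2) by
      simp [Finset.mul_sum]]
    rw [Real.exp_sum, ENNReal.ofReal_mul hC0,
      ENNReal.ofReal_prod_of_nonneg (fun i _ => (Real.exp_pos _).le)]
  simp_rw [h1]
  rw [ENNReal.tsum_mul_left,
    tsum_pi_pow (fun a : ℕ+ => ENNReal.ofReal (Real.exp (-(cy * ((a:ℕ):ℝ) ^ 2)))) lam]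
  have h2 : (∑' a : ℕ+, ENNReal.ofReal (Real.exp (-(cy * ((a:ℕ):ℝ) ^ 2))))
      ≤ ENNReal.ofReal K := by
    rw [← ENNReal.ofReal_tsum_of_nonneg (fun n => (Real.exp_pos _).le) (summable_pnat_exp hcy)]
    exact ENNReal.ofReal_le_ofReal hK
  calc ENNReal.ofReal C0 * (∑' a : ℕ+, ENNReal.ofReal (Real.exp (-(cy * ((a:ℕ):ℝ) ^ 2)))) ^ lam
      ≤ ENNReal.ofReal C0 * (ENNReal.ofReal K) ^ lam := by gcongr
    _ = ENNReal.ofReal (C0 * K ^ lam) := by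
        rw [← ENNReal.ofReal_pow hK0, ← ENNReal.ofReal_mul hC0]

/-- For `0 ≤ η ≤ h-1`, `0 ≤ ℓ ≤ η`, `1 ≤ λ ≤ h-η` and
`k > -τ(r,𝔇) + (h-η-ℓ)/2`, the quantity
`I_{1,2,λ} = ∑_{f₁≥1}⋯∑_{f_λ≥1} ∫_{(1/N)} |e^{Nz}| |z|^{-k-1-τ(r,𝔇)-(h-η+ℓ)/2}
  e^{-π² Re(1/z)(f₁²+⋯+f_λ²)} |ω₂(π²/z)|^{h-η-λ} |dz|` is finite. -/
theorem statement13 (d h : ℕ) (hd : 1 ≤ d) (hh : 1 ≤ h) (r : Fin d → ℕ)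
    (hr : ∀ j, 1 ≤ r j) (N : ℕ) (hN : 1 ≤ N)
    (η ℓ lam : ℕ) (hη : η ≤ h - 1) (hℓ : ℓ ≤ η) (hlam1 : 1 ≤ lam) (hlam2 : lam ≤ h - η)
    (k : ℝ) (hk : -(∑ j, 1 / (r j : ℝ)) + ((h : ℝ) - η - ℓ) / 2 < k) :
    (∑' f : Fin lam → ℕ+,
      ∫⁻ y : ℝ, ENNReal.ofReal
        (‖Complex.exp ((N : ℂ) * ((1 / (N : ℂ)) + y * Complex.I))‖ *
          ‖(1 / (N : ℂ)) + y * Complex.I‖ ^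
            (-k - 1 - (∑ j, 1 / (r j : ℝ)) - ((h : ℝ) - η + ℓ) / 2) *
          Real.exp (-(Real.pi) ^ 2 * ((1 / ((1 / (N : ℂ)) + y * Complex.I)).re) *
            ∑ i, ((f i : ℕ) : ℝ) ^ 2) *
          ‖omega2 ((Real.pi : ℂ) ^ 2 / ((1 / (N : ℂ)) + y * Complex.I))‖ ^
            (h - η - lam))) < ⊤ := by
  have hNp : (0:ℝ) < (N:ℝ) := by exact_mod_cast hN
  have hηh : η + 1 ≤ h := by omega
  set t : ℝ := ∑ j, 1 / (r j : ℝ) with ht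
  set p : ℝ := -k - 1 - t - ((h : ℝ) - η + ℓ) / 2 with hp
  set m : ℕ := h - η - lam with hm
  have hmlam : m + lam = h - η := by omega
  have hcast : ((m + lam : ℕ) : ℝ) = (h : ℝ) - η := by
    rw [hmlam, Nat.cast_sub (by omega : η ≤ h)]
  set q : ℝ := p + ((h:ℝ) - η) with hqdef
  have hq1 : q < -1 := by rw [hqdef, hp]; linarith
  have hC2 : (0:ℝ) ≤ Real.exp 1 * (3*(N:ℝ))^m * (3*(N:ℝ))^lam := by positivity
  have hApos : ∀ y : ℝ, 0 < ‖(1 / (N : ℂ)) + y * Complex.I‖ :=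
    fun y => abs_zz_pos hN y
  calc (∑' f : Fin lam → ℕ+,
      ∫⁻ y : ℝ, ENNReal.ofReal
        (‖Complex.exp ((N : ℂ) * ((1 / (N : ℂ)) + y * Complex.I))‖ *
          ‖(1 / (N : ℂ)) + y * Complex.I‖ ^ p *
          Real.exp (-(Real.pi) ^ 2 * ((1 / ((1 / (N : ℂ)) + y * Complex.I)).re) *
            ∑ i, ((f i : ℕ) : ℝ) ^ 2) *
          ‖omega2 ((Real.pi : ℂ) ^ 2 / ((1 / (N : ℂ)) + y * Complex.I))‖ ^ m))
      ≤ ∑' f : Fin lam → ℕ+, ∫⁻ y : ℝ, ENNReal.ofReal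
          ((Real.exp 1 * (3*(N:ℝ))^m *
            (‖(1 / (N : ℂ)) + y * Complex.I‖ ^ p *
             ‖(1 / (N : ℂ)) + y * Complex.I‖ ^ m)) *
           Real.exp (-(Real.pi ^ 2 * ((1 / ((1 / (N : ℂ)) + y * Complex.I)).re) *
             ∑ i, ((f i : ℕ) : ℝ) ^ 2))) := by
        refine ENNReal.tsum_le_tsum fun f => lintegral_mono fun y => ENNReal.ofReal_le_ofReal ?_
        have hE : ‖Complex.exp ((N : ℂ) * ((1 / (N : ℂ)) + y * Complex.I))‖
            = Real.exp 1 := by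
          rw [Complex.norm_exp]
          congr 1
          rw [Complex.mul_re, zz_re]
          simp [mul_inv_cancel₀ hNp.ne']
        have hOre : (((Real.pi:ℂ))^2 / ((1 / (N : ℂ)) + y * Complex.I)).re
            = Real.pi^2 * ((1 / ((1 / (N : ℂ)) + y * Complex.I)).re) := by
          rw [div_eq_mul_one_div,
            show ((Real.pi:ℂ)^2) = (((Real.pi^2:ℝ)):ℂ) from by push_cast; rfl,
            Complex.re_ofReal_mul]
        have hO : ‖omega2 ((Real.pi:ℂ)^2 / ((1 / (N : ℂ)) + y * Complex.I))‖
            ≤ 3*(N:ℝ)*‖(1 / (N : ℂ)) + y * Complex.I‖ := by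
          refine (abs_omega2_le ?_).trans ?_
          · rw [hOre]; exact cc_pos hN y
          · rw [hOre]; exact thsum_cc_le hN y
        have hX : Real.exp (-(Real.pi) ^ 2 * ((1 / ((1 / (N : ℂ)) + y * Complex.I)).re) *
              ∑ i, ((f i : ℕ) : ℝ) ^ 2)
            = Real.exp (-(Real.pi ^ 2 * ((1 / ((1 / (N : ℂ)) + y * Complex.I)).re) *
              ∑ i, ((f i : ℕ) : ℝ) ^ 2)) := by ring_nf
        rw [hE, hX]
        have h1 : ‖omega2 ((Real.pi:ℂ)^2 / ((1 / (N : ℂ)) + y * Complex.I))‖ ^ m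
            ≤ (3*(N:ℝ)*‖(1 / (N : ℂ)) + y * Complex.I‖) ^ m :=
          pow_le_pow_left₀ (norm_nonneg _) hO m
        calc Real.exp 1 * ‖(1 / (N : ℂ)) + y * Complex.I‖ ^ p *
              Real.exp (-(Real.pi ^ 2 * ((1 / ((1 / (N : ℂ)) + y * Complex.I)).re) *
                ∑ i, ((f i : ℕ) : ℝ) ^ 2)) *
              ‖omega2 ((Real.pi:ℂ)^2 / ((1 / (N : ℂ)) + y * Complex.I))‖ ^ m
            ≤ Real.exp 1 * ‖(1 / (N : ℂ)) + y * Complex.I‖ ^ p *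
              Real.exp (-(Real.pi ^ 2 * ((1 / ((1 / (N : ℂ)) + y * Complex.I)).re) *
                ∑ i, ((f i : ℕ) : ℝ) ^ 2)) *
              (3*(N:ℝ)*‖(1 / (N : ℂ)) + y * Complex.I‖) ^ m := by
              refine mul_le_mul_of_nonneg_left h1 ?_
              have := Real.rpow_nonneg (norm_nonneg ((1 / (N : ℂ)) + y * Complex.I)) p
              positivity
          _ = (Real.exp 1 * (3*(N:ℝ))^m *
              (‖(1 / (N : ℂ)) + y * Complex.I‖ ^ p *
               ‖(1 / (N : ℂ)) + y * Complex.I‖ ^ m)) *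
              Real.exp (-(Real.pi ^ 2 * ((1 / ((1 / (N : ℂ)) + y * Complex.I)).re) *
                ∑ i, ((f i : ℕ) : ℝ) ^ 2)) := by ring
    _ = ∫⁻ y : ℝ, ∑' f : Fin lam → ℕ+, ENNReal.ofReal
          ((Real.exp 1 * (3*(N:ℝ))^m *
            (‖(1 / (N : ℂ)) + y * Complex.I‖ ^ p *
             ‖(1 / (N : ℂ)) + y * Complex.I‖ ^ m)) *
           Real.exp (-(Real.pi ^ 2 * ((1 / ((1 / (N : ℂ)) + y * Complex.I)).re) *
             ∑ i, ((f i : ℕ) : ℝ) ^ 2))) := by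
        refine (lintegral_tsum fun f => ?_).symm
        have hzc : Continuous fun y : ℝ => (1 / (N : ℂ)) + (y:ℂ) * Complex.I := by
          continuity
        have hAc : Continuous fun y : ℝ => ‖(1 / (N : ℂ)) + y * Complex.I‖ :=
          continuous_norm.comp hzc
        have hrec : Continuous fun y : ℝ => (1 / ((1 / (N : ℂ)) + y * Complex.I)).re :=
          Complex.continuous_re.comp (continuous_const.div hzc fun y => zz_ne_zero hN y)
        refine (ENNReal.continuous_ofReal.comp ?_).measurable.aemeasurable
        exact ((continuous_const.mul
          ((hAc.rpow_const fun y => Or.inl (hApos y).ne').mul (hAc.pow m))).mul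
          (Real.continuous_exp.comp (((continuous_const.mul hrec).mul continuous_const).neg)))
    _ ≤ ∫⁻ y : ℝ, ENNReal.ofReal
          ((Real.exp 1 * (3*(N:ℝ))^m * (3*(N:ℝ))^lam) *
            ‖(1 / (N : ℂ)) + y * Complex.I‖ ^ q) := by
        refine lintegral_mono fun y => ?_
        have hAy := hApos y
        have hArp := Real.rpow_nonneg (norm_nonneg ((1 / (N : ℂ)) + y * Complex.I)) p
        refine le_trans (stepC lam (cc_pos hN y)
          (C0 := Real.exp 1 * (3*(N:ℝ))^m *
            (‖(1 / (N : ℂ)) + y * Complex.I‖ ^ p *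
             ‖(1 / (N : ℂ)) + y * Complex.I‖ ^ m))
          (by positivity)
          (K := 3*(N:ℝ)*‖(1 / (N : ℂ)) + y * Complex.I‖) (by positivity)
          (thsum_cc_le hN y)) ?_
        apply ENNReal.ofReal_le_ofReal
        apply le_of_eq
        have hAq : ‖(1 / (N : ℂ)) + y * Complex.I‖ ^ p *
            (‖(1 / (N : ℂ)) + y * Complex.I‖ ^ m *
             ‖(1 / (N : ℂ)) + y * Complex.I‖ ^ lam)
            = ‖(1 / (N : ℂ)) + y * Complex.I‖ ^ q := by
          rw [← pow_add, ← Real.rpow_natCast (‖(1 / (N : ℂ)) + y * Complex.I‖) (m + lam),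
            ← Real.rpow_add hAy, hcast, hqdef]
        rw [← hAq]
        ring
    _ < ⊤ := lintegral_abs_rpow hN hq1 hC2
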